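/- arXiv:1807.06167 — 2 statements merged into one kernel-verified Lean document; each statement's English description precedes it below -/
import Mathlib

section
/- Let (Ω, F, P) be a probability space, (H_n)_{n≥1} a decreasing sequence of sub-σ-fields, and A an event such that for every n, A belongs to the P-completion of H_n. Then P(A | ⋂_n H_n) = 𝟙_A almost surely; in particular, A belongs to the P-completion of the tail σ-field ⋂_n H_n. -/
open MeasureTheory

/-- Lévy's downward theorem application: if `(H n)` is a decreasing sequence
of sub-σ-fields and the event `A` belongs to the `P`-completion of each `H n`, then
`P(A | ⋂ n, H n) = 𝟙_A` a.s.; in particular `A` belongs to the `P`-completion of the tail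
σ-field `⋂ n, H n`. -/
theorem stmt8
    {Ω : Type*} {F : MeasurableSpace Ω} (P : Measure Ω) [IsProbabilityMeasure P]
    (H : ℕ → MeasurableSpace Ω) (hle : ∀ n, H n ≤ F) (hanti : Antitone H)
    (A : Set Ω) (hA : MeasurableSet A)
    (hcompl : ∀ n, ∃ B : Set Ω, MeasurableSet[H n] B ∧ P (symmDiff A B) = 0) :
    (P[A.indicator (fun _ => (1 : ℝ)) | ⨅ n, H n]
        =ᵐ[P] A.indicator fun _ => (1 : ℝ)) ∧
    ∃ B : Set Ω, MeasurableSet[⨅ n, H n] B ∧ P (symmDiff A B) = 0 := by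
  classical
  choose Bf hBf hBf0 using hcompl
  set S : ℕ → Set Ω := fun N => ⋃ n, Bf (N + n) with hS
  have hSanti : Antitone S := by
    apply antitone_nat_of_succ_le
    intro N x hx
    obtain ⟨n, hn⟩ := Set.mem_iUnion.1 hx
    exact Set.mem_iUnion.2 ⟨n + 1, by rw [show N + (n + 1) = N + 1 + n by omega]; exact hn⟩
  set B : Set Ω := ⋂ N, S N with hB
  -- B is measurable w.r.t. each H k
  have hBmk : ∀ k, MeasurableSet[H k] B := by
    intro k
    have hBe : B = ⋂ N, S (k + N) := by
      apply subset_antisymm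
      · exact Set.iInter_mono' fun N => ⟨k + N, subset_rfl⟩
      · exact Set.iInter_mono' fun N => ⟨N, hSanti (Nat.le_add_left N k)⟩
    rw [hBe]
    refine MeasurableSet.iInter fun N => MeasurableSet.iUnion fun n => ?_
    exact hanti (by omega : k ≤ k + N + n) _ (hBf (k + N + n))
  have hBm : MeasurableSet[⨅ n, H n] B := by
    rw [MeasurableSpace.measurableSet_iInf]
    exact hBmk
  -- symm diff is null
  have hsub : symmDiff A B ⊆ ⋃ n, symmDiff A (Bf n) := by
    intro x hx
    rcases hx with ⟨hxA, hxB⟩ | ⟨hxB, hxA⟩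
    · simp only [hB, Set.mem_iInter, not_forall] at hxB
      obtain ⟨N, hN⟩ := hxB
      have : x ∉ Bf N := fun h => hN (Set.mem_iUnion.2 ⟨0, by simpa using h⟩)
      exact Set.mem_iUnion.2 ⟨N, Or.inl ⟨hxA, this⟩⟩
    · have hx0 : x ∈ S 0 := Set.mem_iInter.1 hxB 0
      obtain ⟨n, hn⟩ := Set.mem_iUnion.1 hx0
      exact Set.mem_iUnion.2 ⟨0 + n, Or.inr ⟨hn, hxA⟩⟩
  have hnull : P (symmDiff A B) = 0 :=
    le_antisymm ((measure_mono hsub).trans (measure_iUnion_null hBf0).le) zero_le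
  -- indicator ae eq
  have hae : A.indicator (fun _ => (1 : ℝ)) =ᵐ[P] B.indicator (fun _ => (1 : ℝ)) := by
    have : ∀ x, A.indicator (fun _ => (1 : ℝ)) x ≠ B.indicator (fun _ => (1 : ℝ)) x →
        x ∈ symmDiff A B := by
      intro x hx
      by_cases hxA : x ∈ A <;> by_cases hxB : x ∈ B
      · exact absurd (by simp [Set.indicator_of_mem, hxA, hxB]) hx
      · exact Or.inl ⟨hxA, hxB⟩
      · exact Or.inr ⟨hxB, hxA⟩
      · exact absurd (by simp [hxA, hxB]) hx
    exact measure_mono_null (fun x hx => this x hx) hnull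
  have hm : (⨅ n, H n) ≤ F := (iInf_le H 0).trans (hle 0)
  refine ⟨?_, B, hBm, hnull⟩
  calc P[A.indicator (fun _ => (1 : ℝ)) | ⨅ n, H n]
      =ᵐ[P] P[B.indicator (fun _ => (1 : ℝ)) | ⨅ n, H n] := condExp_congr_ae hae
    _ =ᵐ[P] B.indicator (fun _ => (1 : ℝ)) := by
        rw [condExp_of_stronglyMeasurable hm]
        · exact stronglyMeasurable_const.indicator hBm
        · exact (integrable_const (1 : ℝ)).indicator (hm _ hBm)
    _ =ᵐ[P] A.indicator (fun _ => (1 : ℝ)) := hae.symm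
end

section
/- Let (Ω, F, P) be a probability space, A ∈ F an event, and for each n a sub-σ-field G_n such that P(A | G_n) → 𝟙_A in L¹. Then for each k ≥ 1, A belongs to the P-completion of the σ-field ⋁_{n ≥ k} G_n generated by the union of the G_n for n ≥ k. -/
open MeasureTheory Filter

/-- if `P(A | G n) → 𝟙_A` in `L¹`, then for each `k`, the event `A` belongs
to the `P`-completion of the σ-field `⋁_{n ≥ k} G n`. -/
theorem stmt10
    {Ω : Type*} {F : MeasurableSpace Ω} (P : Measure Ω) [IsProbabilityMeasure P]
    (G : ℕ → MeasurableSpace Ω) (hle : ∀ n, G n ≤ F)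
    (A : Set Ω) (hA : MeasurableSet A)
    (hconv : Tendsto (fun n => eLpNorm ((P[A.indicator (fun _ => (1 : ℝ)) | G n])
        - A.indicator fun _ => (1 : ℝ)) 1 P) atTop (nhds 0)) :
    ∀ k : ℕ, ∃ B : Set Ω, MeasurableSet[⨆ n, ⨆ _ : k ≤ n, G n] B ∧ P (symmDiff A B) = 0 := by
  intro k
  set m : MeasurableSpace Ω := ⨆ n, ⨆ _ : k ≤ n, G n with hm_def
  set f : ℕ → Ω → ℝ := fun n => P[A.indicator (fun _ => (1 : ℝ)) | G (n + k)] with hf_def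
  have hGm : ∀ n, G (n + k) ≤ m := fun n =>
    le_iSup₂ (f := fun n (_ : k ≤ n) => G n) (n + k) (Nat.le_add_left k n)
  have hmeas_m : ∀ n, Measurable[m] (f n) := fun n =>
    ((stronglyMeasurable_condExp.mono (hGm n)).measurable)
  have hmeas_F : ∀ n, AEStronglyMeasurable[F] (f n) P := fun n =>
    ((stronglyMeasurable_condExp.mono (hle (n + k))).aestronglyMeasurable)
  have hindm : AEStronglyMeasurable[F] (A.indicator fun _ => (1 : ℝ)) P :=
    (stronglyMeasurable_const.indicator hA).aestronglyMeasurable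
  have hconv' : Tendsto (fun n => eLpNorm (f n - A.indicator fun _ => (1 : ℝ)) 1 P)
      atTop (nhds 0) := hconv.comp (tendsto_add_atTop_nat k)
  have htm : TendstoInMeasure P f atTop (A.indicator fun _ => (1 : ℝ)) :=
    tendstoInMeasure_of_tendsto_eLpNorm one_ne_zero hmeas_F hindm hconv'
  obtain ⟨ns, _, hae⟩ := htm.exists_seq_tendsto_ae
  refine ⟨{ω | Tendsto (fun j => f (ns j) ω) atTop (nhds 1)}, ?_, ?_⟩
  · exact measurableSet_tendsto (nhds (1 : ℝ)) (fun j => hmeas_m (ns j))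
  · refine measure_mono_null ?_ hae
    intro ω hω
    simp only [Set.mem_compl_iff, Set.mem_setOf_eq]
    intro htend
    rcases hω with ⟨hA', hB'⟩ | ⟨hB', hA'⟩
    · exact hB' (by simpa [Set.indicator_of_mem hA'] using htend)
    · have : Tendsto (fun j => f (ns j) ω) atTop (nhds 0) := by
        simpa [Set.indicator_of_notMem hA'] using htend
      exact one_ne_zero (tendsto_nhds_unique hB' this)
end
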